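/- The number of posets P ⊆ [[n]] satisfying the normality condition (for all 1 ≤ i ≤ j < k ≤ l ≤ n, (i,l) ∉ P implies (j,k) ∉ P) equals the n-th Catalan number C_n = (1/(n+1)) * binomial(2n, n). -/

import Mathlib

open scoped Classical

abbrev Mat (n : ℕ) (F : Type*) := Matrix (Fin n) (Fin n) F

/-- The set of positions strictly above the diagonal. -/
def PosUpper (n : ℕ) : Set (Fin n × Fin n) := {p | p.1 < p.2}

/-- A poset on `[n]`: a set of strictly-upper positions closed under composition. -/
def IsPoset {n : ℕ} (P : Set (Fin n × Fin n)) : Prop :=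
  P ⊆ PosUpper n ∧ ∀ i j k : Fin n, (i, j) ∈ P → (j, k) ∈ P → (i, k) ∈ P

/-- The normality condition for a pattern poset. -/
def NormalPoset {n : ℕ} (P : Set (Fin n × Fin n)) : Prop :=
  ∀ i j k l : Fin n, i ≤ j → j < k → k ≤ l → (i, l) ∉ P → (j, k) ∉ P

/-- The pattern group `U_P` (as a set of matrices). -/
def UPg {n : ℕ} {F : Type*} [Field F] (P : Set (Fin n × Fin n)) : Set (Mat n F) :=
  {g | (∀ i, g i i = 1) ∧ ∀ i j : Fin n, i ≠ j → (i, j) ∉ P → g i j = 0}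

/-- The algebra `n_P` of strictly upper triangular matrices supported on `P`. -/
def nPa {n : ℕ} {F : Type*} [Field F] (P : Set (Fin n × Fin n)) : Set (Mat n F) :=
  {X | ∀ i j : Fin n, (i, j) ∉ P → X i j = 0}

/-- The support of a matrix. -/
def msupp {n : ℕ} {F : Type*} [Field F] (X : Mat n F) : Set (Fin n × Fin n) :=
  {p | X p.1 p.2 ≠ 0}

/-- `F_q`-labeled set partitions: matrices in `n_P` with at most one nonzero entry
in each row and each column. -/
def SPa {n : ℕ} {F : Type*} [Field F] (P : Set (Fin n × Fin n)) : Set (Mat n F) :=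
  {X | X ∈ nPa P ∧ (∀ i j j' : Fin n, X i j ≠ 0 → X i j' ≠ 0 → j = j') ∧
       (∀ i i' j : Fin n, X i j ≠ 0 → X i' j ≠ 0 → i = i')}


/-- Monotone subdiagonal sequences. -/
def Dn (n : ℕ) : Type := {g : Fin n → ℕ // Monotone g ∧ ∀ i : Fin n, g i ≤ i.val}

instance Dn.finite (n : ℕ) : Finite (Dn n) := by
  apply Finite.of_injective (fun g : Dn n => fun i : Fin n => (⟨g.1 i, lt_of_le_of_lt (g.2.2 i) i.isLt⟩ : Fin n))
  intro g g' h
  apply Subtype.ext; funext i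
  have := congrFun h i
  simpa [Fin.ext_iff] using this

lemma mem_iff_lt_card {n : ℕ} (S : Finset (Fin n))
    (hS : ∀ a b : Fin n, a ≤ b → b ∈ S → a ∈ S) (i : Fin n) :
    i ∈ S ↔ i.val < S.card := by
  constructor
  · intro hi
    have hsub : Finset.Iic i ⊆ S := fun j hj => hS j i (Finset.mem_Iic.mp hj) hi
    have := Finset.card_le_card hsub
    rw [Fin.card_Iic] at this
    omega
  · intro h
    by_contra hi
    have hsub : S ⊆ Finset.Iio i := by
      intro j hj
      rw [Finset.mem_Iio]
      by_contra hle
      exact hi (hS i j (le_of_not_gt hle) hj)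
    have := Finset.card_le_card hsub
    rw [Fin.card_Iio] at this
    omega

section Glue
variable {n : ℕ}

/-- The gluing of two sequences at diagonal position `k`. -/
def glue (x : Σ k : Fin (n+1), Dn k.val × Dn (n - k.val)) : Fin (n+1) → ℕ :=
  fun i =>
    if h : i.val < x.1.val then (x.2.1).1 ⟨i.val, h⟩
    else if h2 : i.val = x.1.val then x.1.val
    else x.1.val + (x.2.2).1 ⟨i.val - (x.1.val + 1), by
      have := i.isLt; have := x.1.isLt; omega⟩

lemma glue_lt (x : Σ k : Fin (n+1), Dn k.val × Dn (n - k.val)) (i : Fin (n+1))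
    (h : i.val < x.1.val) : glue x i = (x.2.1).1 ⟨i.val, h⟩ := dif_pos h

lemma glue_eq (x : Σ k : Fin (n+1), Dn k.val × Dn (n - k.val)) (i : Fin (n+1))
    (h : i.val = x.1.val) : glue x i = x.1.val := by
  rw [glue, dif_neg (by omega), dif_pos h]

lemma glue_gt (x : Σ k : Fin (n+1), Dn k.val × Dn (n - k.val)) (i : Fin (n+1))
    (h : x.1.val < i.val) :
    glue x i = x.1.val + (x.2.2).1 ⟨i.val - (x.1.val + 1), by
      have := i.isLt; omega⟩ := by
  rw [glue, dif_neg (by omega), dif_neg (by omega)]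

/-- gluing, bundled with its properties. -/
def glueD (x : Σ k : Fin (n+1), Dn k.val × Dn (n - k.val)) : Dn (n+1) := by
  refine ⟨glue x, ?_, ?_⟩
  · intro i j hij
    have hij' : i.val ≤ j.val := hij
    rcases lt_trichotomy (j.val) (x.1.val) with hj | hj | hj
    · rw [glue_lt x i (by omega), glue_lt x j hj]
      exact (x.2.1).2.1 (show (⟨i.val, by omega⟩ : Fin x.1.val) ≤ ⟨j.val, hj⟩ from hij')
    · rw [glue_eq x j hj]
      rcases lt_or_eq_of_le (show i.val ≤ x.1.val by omega) with hi | hi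
      · rw [glue_lt x i hi]
        have := (x.2.1).2.2 (⟨i.val, hi⟩ : Fin x.1.val)
        simp only at this; omega
      · rw [glue_eq x i hi]
    · rw [glue_gt x j hj]
      rcases lt_trichotomy (i.val) (x.1.val) with hi | hi | hi
      · rw [glue_lt x i hi]
        have := (x.2.1).2.2 (⟨i.val, hi⟩ : Fin x.1.val)
        simp only at this; omega
      · rw [glue_eq x i hi]; omega
      · rw [glue_gt x i hi]
        have := (x.2.2).2.1 (show (⟨i.val - (x.1.val+1), by have := i.isLt; omega⟩ : Fin (n - x.1.val)) ≤ ⟨j.val - (x.1.val+1), by have := j.isLt; omega⟩ from by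
          show i.val - (x.1.val+1) ≤ j.val - (x.1.val+1); omega)
        omega
  · intro i
    rcases lt_trichotomy (i.val) (x.1.val) with hi | hi | hi
    · rw [glue_lt x i hi]
      exact (x.2.1).2.2 ⟨i.val, hi⟩
    · rw [glue_eq x i hi]; omega
    · rw [glue_gt x i hi]
      have := (x.2.2).2.2 (⟨i.val - (x.1.val+1), by have := i.isLt; omega⟩ : Fin (n - x.1.val))
      simp only at this; omega

/-- The set of diagonal touches. -/
def touchSet (g : Dn (n+1)) : Finset (Fin (n+1)) :=
  Finset.univ.filter (fun i => g.1 i = i.val)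

lemma touch_nonempty (g : Dn (n+1)) : (touchSet g).Nonempty := by
  refine ⟨0, ?_⟩
  have := g.2.2 0
  simp only [touchSet, Finset.mem_filter, Finset.mem_univ, true_and, Fin.val_zero] at *
  omega

/-- The largest diagonal touch. -/
def mtc (g : Dn (n+1)) : Fin (n+1) := (touchSet g).max' (touch_nonempty g)

lemma mt_touch (g : Dn (n+1)) : g.1 (mtc g) = (mtc g).val := by
  have := (touchSet g).max'_mem (touch_nonempty g)
  simpa [touchSet, mtc] using this

lemma lt_of_mt_lt (g : Dn (n+1)) (i : Fin (n+1)) (h : mtc g < i) : g.1 i < i.val := by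
  have hne : g.1 i ≠ i.val := by
    intro he
    have : i ∈ touchSet g := by simp [touchSet, he]
    exact absurd (Finset.le_max' _ i this) (not_le.mpr h)
  have := g.2.2 i
  omega

lemma mt_glueD (x : Σ k : Fin (n+1), Dn k.val × Dn (n - k.val)) : mtc (glueD x) = x.1 := by
  apply le_antisymm
  · apply Finset.max'_le
    intro i hi
    simp only [touchSet, Finset.mem_filter, Finset.mem_univ, true_and] at hi
    by_contra hlt
    rw [not_le] at hlt
    have hg := glue_gt x i hlt
    have hb := (x.2.2).2.2 (⟨i.val - (x.1.val+1), by have := i.isLt; omega⟩ : Fin (n - x.1.val))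
    simp only at hb
    have : (glueD x).1 i = glue x i := rfl
    rw [this, hg] at hi
    omega
  · apply Finset.le_max'
    simp only [touchSet, Finset.mem_filter, Finset.mem_univ, true_and]
    exact glue_eq x x.1 rfl

end Glue

lemma glueD_bijective (n : ℕ) :
    Function.Bijective (glueD : (Σ k : Fin (n+1), Dn k.val × Dn (n - k.val)) → Dn (n+1)) := by
  constructor
  · rintro ⟨k, g1, g2⟩ ⟨k', g1', g2'⟩ h
    have hk : k = k' := by
      have h2 := congrArg mtc h
      rwa [mt_glueD, mt_glueD] at h2
    subst hk
    apply congrArg (Sigma.mk k)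
    have hval := congrArg Subtype.val h
    refine Prod.ext (Subtype.ext (funext fun i => ?_)) (Subtype.ext (funext fun j => ?_))
    · have hi : (i.val : ℕ) < k.val := i.isLt
      have hikn : i.val < n + 1 := by have := k.isLt; omega
      have h1 := congrFun hval ⟨i.val, hikn⟩
      have e1 : glue ⟨k, g1, g2⟩ ⟨i.val, hikn⟩ = g1.1 i := by
        rw [glue_lt ⟨k, g1, g2⟩ ⟨i.val, hikn⟩ hi]
      have e2 : glue ⟨k, g1', g2'⟩ ⟨i.val, hikn⟩ = g1'.1 i := by
        rw [glue_lt ⟨k, g1', g2'⟩ ⟨i.val, hikn⟩ hi]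
      have h1' : glue ⟨k, g1, g2⟩ ⟨i.val, hikn⟩ = glue ⟨k, g1', g2'⟩ ⟨i.val, hikn⟩ := h1
      show g1.1 i = g1'.1 i
      exact e1.symm.trans (h1'.trans e2)
    · have hj : (j.val : ℕ) < n - k.val := j.isLt
      have hjn : k.val + 1 + j.val < n + 1 := by omega
      have hgt : k.val < (⟨k.val + 1 + j.val, hjn⟩ : Fin (n+1)).val := by simp; omega
      have h1 := congrFun hval ⟨k.val + 1 + j.val, hjn⟩
      have hidx : (⟨(⟨k.val + 1 + j.val, hjn⟩ : Fin (n+1)).val - (k.val + 1), by omega⟩ : Fin (n - k.val)) = j := by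
        apply Fin.ext; simp
      have e1 : glue ⟨k, g1, g2⟩ ⟨k.val + 1 + j.val, hjn⟩ = k.val + g2.1 j := by
        rw [glue_gt ⟨k, g1, g2⟩ ⟨k.val + 1 + j.val, hjn⟩ hgt]
        exact congrArg (fun t => k.val + g2.1 t) hidx
      have e2 : glue ⟨k, g1', g2'⟩ ⟨k.val + 1 + j.val, hjn⟩ = k.val + g2'.1 j := by
        rw [glue_gt ⟨k, g1', g2'⟩ ⟨k.val + 1 + j.val, hjn⟩ hgt]
        exact congrArg (fun t => k.val + g2'.1 t) hidx
      have h1' : glue ⟨k, g1, g2⟩ ⟨k.val + 1 + j.val, hjn⟩ = glue ⟨k, g1', g2'⟩ ⟨k.val + 1 + j.val, hjn⟩ := h1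
      have h2 := e1.symm.trans (h1'.trans e2)
      show g2.1 j = g2'.1 j
      omega
  · intro g
    set k := mtc g with hkdef
    have hkt : g.1 k = k.val := mt_touch g
    refine ⟨⟨k, ⟨fun i => g.1 ⟨i.val, by have := i.isLt; have := k.isLt; omega⟩, ?_, ?_⟩,
      ⟨fun j => g.1 ⟨k.val + 1 + j.val, by have := j.isLt; omega⟩ - k.val, ?_, ?_⟩⟩, ?_⟩
    · intro a b hab
      exact g.2.1 (show (⟨a.val, _⟩ : Fin (n+1)) ≤ ⟨b.val, _⟩ from hab)
    · intro a
      exact g.2.2 _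
    · intro a b hab
      apply Nat.sub_le_sub_right
      exact g.2.1 (show (⟨k.val + 1 + a.val, _⟩ : Fin (n+1)) ≤ ⟨k.val + 1 + b.val, _⟩ from by
        show k.val + 1 + a.val ≤ k.val + 1 + b.val
        have : a.val ≤ b.val := hab
        omega)
    · intro a
      have pfa : k.val + 1 + a.val < n + 1 := by have := a.isLt; omega
      have hlt : k < (⟨k.val + 1 + a.val, pfa⟩ : Fin (n+1)) := by
        show k.val < k.val + 1 + a.val; omega
      have h3 : g.1 ⟨k.val + 1 + a.val, pfa⟩ < k.val + 1 + a.val := lt_of_mt_lt g _ hlt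
      show g.1 ⟨k.val + 1 + a.val, pfa⟩ - k.val ≤ a.val
      omega
    · apply Subtype.ext; funext i
      show glue _ i = g.1 i
      rcases lt_trichotomy (i.val) (k.val) with hi | hi | hi
      · rw [glue_lt _ i hi]
      · rw [glue_eq _ i hi]
        show (k.val : ℕ) = g.1 i
        rw [show i = k from Fin.ext hi]
        exact hkt.symm
      · rw [glue_gt _ i hi]
        have hidx : (⟨k.val + 1 + (i.val - (k.val + 1)), by have := i.isLt; omega⟩ : Fin (n+1)) = i :=
          Fin.ext (by simp; omega)
        show k.val + (g.1 ⟨k.val + 1 + (i.val - (k.val + 1)), by have := i.isLt; omega⟩ - k.val) = g.1 i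
        rw [hidx]
        have hmono : g.1 k ≤ g.1 i := g.2.1 (le_of_lt hi)
        omega

noncomputable instance (n : ℕ) : Fintype (Dn n) := Fintype.ofFinite _

lemma card_Dn_zero : Nat.card (Dn 0) = 1 := by
  haveI : Unique (Dn 0) := by
    refine ⟨⟨⟨fun i => i.elim0, fun i => i.elim0, fun i => i.elim0⟩⟩, ?_⟩
    intro g; apply Subtype.ext; funext i; exact i.elim0
  exact Nat.card_unique

lemma card_Dn_succ (n : ℕ) :
    Nat.card (Dn (n+1)) = ∑ k : Fin (n+1), Nat.card (Dn k.val) * Nat.card (Dn (n - k.val)) := by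
  rw [← Nat.card_eq_of_bijective _ (glueD_bijective n)]
  rw [Nat.card_eq_fintype_card, Fintype.card_sigma]
  exact Finset.sum_congr rfl fun k _ => by
    rw [Fintype.card_prod, Nat.card_eq_fintype_card, Nat.card_eq_fintype_card]

lemma card_Dn (n : ℕ) : Nat.card (Dn n) = catalan n := by
  induction n using Nat.strong_induction_on with
  | _ n ih =>
    match n with
    | 0 => rw [card_Dn_zero, catalan_zero]
    | Nat.succ m =>
      rw [card_Dn_succ, catalan_succ]
      exact Finset.sum_congr rfl fun k _ => by
        rw [ih k.val (by have := k.isLt; omega), ih (m - k.val) (by omega)]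

def posetOfD {n : ℕ} (g : Dn n) :
    {P : Set (Fin n × Fin n) // P ⊆ PosUpper n ∧ NormalPoset P} := by
  refine ⟨{p | (p.1 : ℕ) < g.1 p.2}, ?_, ?_⟩
  · intro p hp
    have h1 : (p.1 : ℕ) < g.1 p.2 := hp
    have h2 := g.2.2 p.2
    show p.1 < p.2
    rw [Fin.lt_def]
    omega
  · intro i j k l hij hjk hkl hil hmem
    apply hil
    have h1 : (j : ℕ) < g.1 k := hmem
    have h2 : g.1 k ≤ g.1 l := g.2.1 hkl
    have h3 : (i : ℕ) ≤ j := hij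
    show (i : ℕ) < g.1 l
    omega

lemma posetOfD_bijective (n : ℕ) : Function.Bijective (posetOfD (n := n)) := by
  constructor
  · intro g g' h
    have hset := congrArg Subtype.val h
    have hiff : ∀ i j : Fin n, ((i : ℕ) < g.1 j ↔ (i : ℕ) < g'.1 j) := by
      intro i j
      exact Set.ext_iff.mp hset (i, j)
    apply Subtype.ext; funext j
    by_contra hne
    rcases Nat.lt_or_ge (g.1 j) (g'.1 j) with hlt | hge
    · have hb : g.1 j < n := by have := g'.2.2 j; have := j.isLt; omega
      have := (hiff ⟨g.1 j, hb⟩ j).mpr (by simpa using hlt)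
      simp at this
    · have hlt : g'.1 j < g.1 j := by omega
      have hb : g'.1 j < n := by have := g.2.2 j; have := j.isLt; omega
      have := (hiff ⟨g'.1 j, hb⟩ j).mp (by simpa using hlt)
      simp at this
  · rintro ⟨P, hsub, hnorm⟩
    set S : Fin n → Finset (Fin n) := fun j => Finset.univ.filter (fun i => (i, j) ∈ P) with hS
    have hmemS : ∀ i j : Fin n, i ∈ S j ↔ (i, j) ∈ P := by
      intro i j; simp [hS]
    have hdc : ∀ j a b : Fin n, a ≤ b → b ∈ S j → a ∈ S j := by
      intro j a b hab hb
      rw [hmemS] at hb ⊢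
      have hbj : b < j := hsub hb
      by_contra ha
      exact hnorm a b j j hab hbj (le_refl j) ha hb
    have hmem : ∀ i j : Fin n, (i, j) ∈ P ↔ (i : ℕ) < (S j).card := by
      intro i j
      rw [← hmemS i j]
      exact mem_iff_lt_card (S j) (hdc j) i
    have hmono : Monotone (fun j => (S j).card) := by
      intro j l hjl
      apply Finset.card_le_card
      intro i hi
      rw [hmemS] at hi ⊢
      have hij : i < j := hsub hi
      by_contra hil
      exact hnorm i i j l (le_refl i) hij hjl hil hi
    have hbound : ∀ j : Fin n, (S j).card ≤ (j : ℕ) := by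
      intro j
      have : S j ⊆ Finset.Iio j := by
        intro i hi
        rw [Finset.mem_Iio]
        exact hsub ((hmemS i j).mp hi)
      have := Finset.card_le_card this
      rwa [Fin.card_Iio] at this
    refine ⟨⟨fun j => (S j).card, hmono, hbound⟩, ?_⟩
    apply Subtype.ext
    apply Set.ext
    intro p
    exact ((hmem p.1 p.2).symm : _)

/-- The number of subsets of `[[n]]` satisfying the normality
condition is the `n`-th Catalan number. -/
theorem card_normal_posets_eq_catalan (n : ℕ) :
    Nat.card {P : Set (Fin n × Fin n) // P ⊆ PosUpper n ∧ NormalPoset P} = catalan n := by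
  rw [← card_Dn n]
  exact (Nat.card_eq_of_bijective _ (posetOfD_bijective n)).symm
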